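/- Let n ≥ 3, let k be a field with char k = 0 or char k > n, and for each permutation σ in the symmetric group S_n let c_σ ∈ k with c_σ ≠ 0. Consider the determinant-like polynomial D = Σ_{σ ∈ S_n} c_σ · x_{1,σ(1)} x_{2,σ(2)} ⋯ x_{n,σ(n)}, a form of degree n in the n² variables x_{ij}. Then D is central: Z(D) = k·I_{n²}, i.e., every matrix X ∈ k^{n²×n²} (rows and columns indexed by the pairs (i,j)) satisfying (H·X)ᵀ = H·X, where H is the Hessian matrix of D, is a scalar multiple of the identity. -/

import Mathlib

open MvPolynomial Matrix

/-- The Hessian matrix of a multivariate polynomial. -/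
noncomputable def hessian {k : Type*} [Field k] {σ : Type*} (f : MvPolynomial σ k) :
    Matrix σ σ (MvPolynomial σ k) :=
  Matrix.of fun i j => pderiv i (pderiv j f)

/-- The center of a form `f`: scalar matrices `X` such that `H · X` is symmetric,
where `H` is the Hessian matrix of `f`. -/
def center {k : Type*} [Field k] {σ : Type*} [Fintype σ] (f : MvPolynomial σ k) :
    Set (Matrix σ σ k) :=
  {X | (hessian f * X.map (C : k → MvPolynomial σ k))ᵀ
        = hessian f * X.map (C : k → MvPolynomial σ k)}

/-- a determinant-like polynomial
`D = Σ_σ c_σ x_{1,σ(1)} ⋯ x_{n,σ(n)}` with all `c_σ ≠ 0` and `n ≥ 3` is central. -/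

lemma coeff_pderiv {k : Type*} [Field k] {σ : Type*} (s : σ) (u : σ →₀ ℕ)
    (f : MvPolynomial σ k) :
    coeff u (pderiv s f) = ((u s + 1 : ℕ) : k) * coeff (u + Finsupp.single s 1) f := by
  classical
  induction f using MvPolynomial.induction_on' with
  | monomial t a =>
    rw [pderiv_monomial, coeff_monomial, coeff_monomial]
    rcases Nat.eq_zero_or_pos (t s) with h0 | hpos
    · have hne : t ≠ u + Finsupp.single s 1 := by
        intro h
        have : t s = u s + 1 := by simp [h]
        omega
      simp [h0, hne]
    · have hle : Finsupp.single s 1 ≤ t := by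
        rw [Finsupp.single_le_iff]; omega
      have hiff : t - Finsupp.single s 1 = u ↔ t = u + Finsupp.single s 1 :=
        tsub_eq_iff_eq_add_of_le hle
      by_cases h : t = u + Finsupp.single s 1
      · have h1 : t - Finsupp.single s 1 = u := hiff.mpr h
        have h2 : t s = u s + 1 := by simp [h]
        rw [if_pos h1, if_pos h, h2]
        push_cast; ring
      · rw [if_neg (fun hh => h (hiff.mp hh)), if_neg h, mul_zero]
  | add p q hp hq =>
    simp only [map_add, coeff_add, hp, hq]; ring

lemma hessian_transpose {k : Type*} [Field k] {σ : Type*} (f : MvPolynomial σ k) :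
    (hessian f)ᵀ = hessian f := by
  classical
  ext i j u
  show coeff u (pderiv j (pderiv i f)) = coeff u (pderiv i (pderiv j f))
  rw [_root_.coeff_pderiv, _root_.coeff_pderiv, _root_.coeff_pderiv, _root_.coeff_pderiv]
  by_cases h : i = j
  · subst h; ring
  · have h1 : ((u + Finsupp.single j 1 : _ →₀ ℕ)) i = u i := by
      simp [Finsupp.add_apply, Finsupp.single_apply, Ne.symm h]
    have h2 : ((u + Finsupp.single i 1 : _ →₀ ℕ)) j = u j := by
      simp [Finsupp.add_apply, Finsupp.single_apply, h]
    rw [h1, h2, add_right_comm]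
    ring

section perms
variable {n : ℕ}

/-- The exponent vector of the monomial `∏ i, x_{i, τ i}`. -/
noncomputable def Mperm (τ : Equiv.Perm (Fin n)) : (Fin n × Fin n) →₀ ℕ :=
  ∑ i : Fin n, Finsupp.single (i, τ i) 1

/-- The exponent vector obtained from `Mperm τ` by deleting rows `p` and `q`. -/
noncomputable def Uperm (τ : Equiv.Perm (Fin n)) (p q : Fin n) : (Fin n × Fin n) →₀ ℕ :=
  ∑ l ∈ (Finset.univ.erase p).erase q, Finsupp.single (l, τ l) 1

lemma Mperm_apply (τ : Equiv.Perm (Fin n)) (i j : Fin n) :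
    Mperm τ (i, j) = if τ i = j then 1 else 0 := by
  rw [Mperm, Finsupp.finset_sum_apply]
  rw [Finset.sum_eq_single i]
  · simp [Finsupp.single_apply, Prod.ext_iff]
  · intro l _ hl
    simp [Finsupp.single_apply, Prod.ext_iff, hl]
  · simp

lemma Uperm_apply (τ : Equiv.Perm (Fin n)) (p q i j : Fin n) :
    Uperm τ p q (i, j) = if i ≠ p ∧ i ≠ q ∧ τ i = j then 1 else 0 := by
  rw [Uperm, Finsupp.finset_sum_apply]
  by_cases hip : i = p
  · subst hip
    rw [Finset.sum_eq_zero, if_neg (by tauto)]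
    intro l hl
    simp only [Finset.mem_erase, Finset.mem_univ] at hl
    simp [Finsupp.single_apply, Prod.ext_iff, hl.2.1]
  · by_cases hiq : i = q
    · subst hiq
      rw [Finset.sum_eq_zero, if_neg (by tauto)]
      intro l hl
      simp only [Finset.mem_erase, Finset.mem_univ] at hl
      simp [Finsupp.single_apply, Prod.ext_iff, hl.1]
    · rw [Finset.sum_eq_single i]
      · simp [Finsupp.single_apply, Prod.ext_iff, hip, hiq]
      · intro l _ hl
        simp [Finsupp.single_apply, Prod.ext_iff, hl]
      · simp [hip, hiq]

lemma Mperm_inj {τ τ' : Equiv.Perm (Fin n)} (h : Mperm τ = Mperm τ') : τ = τ' := by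
  apply Equiv.ext
  intro i
  by_contra hne
  have h1 := congrArg (fun v : (Fin n × Fin n) →₀ ℕ => v (i, τ i)) h
  rw [Mperm_apply, Mperm_apply, if_pos rfl, if_neg (fun hh : τ' i = τ i => hne hh.symm)] at h1
  exact one_ne_zero h1

lemma Uperm_symm (τ : Equiv.Perm (Fin n)) (p q : Fin n) : Uperm τ p q = Uperm τ q p := by
  ext s
  obtain ⟨i, j⟩ := s
  rw [Uperm_apply, Uperm_apply]
  by_cases h1 : i = p <;> by_cases h2 : i = q <;> simp [h1, h2]

lemma Uperm_congr {τ τ' : Equiv.Perm (Fin n)} (p q : Fin n)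
    (h : ∀ l, l ≠ p → l ≠ q → τ l = τ' l) : Uperm τ p q = Uperm τ' p q := by
  rw [Uperm, Uperm]
  apply Finset.sum_congr rfl
  intro l hl
  simp only [Finset.mem_erase, Finset.mem_univ] at hl
  rw [h l hl.2.1 hl.1]

lemma Uperm_add {τ : Equiv.Perm (Fin n)} {p q : Fin n} (hpq : p ≠ q) :
    Uperm τ p q + Finsupp.single (p, τ p) 1 + Finsupp.single (q, τ q) 1 = Mperm τ := by
  rw [Uperm, Mperm, add_right_comm]
  rw [Finset.sum_erase_add _ _ (by simp [Ne.symm hpq])]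
  rw [Finset.sum_erase_add _ _ (by simp)]

end perms

section solve
variable {n : ℕ}

lemma eval_eq {v w : (Fin n × Fin n) →₀ ℕ} (h : v = w) (s : Fin n × Fin n) : v s = w s := by
  rw [h]

lemma solve {p q : Fin n} (hpq : p ≠ q) {τ0 τ : Equiv.Perm (Fin n)} {jp : Fin n}
    {e : Fin n × Fin n}
    (h : Mperm τ = Uperm τ0 p q + Finsupp.single (p, jp) 1 + Finsupp.single e 1) :
    (jp = τ0 p ∧ e = (q, τ0 q) ∧ τ = τ0) ∨
      (jp = τ0 q ∧ e = (q, τ0 p) ∧ τ = τ0 * Equiv.swap p q) := by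
  -- Step A : e = (q, τ q)
  have hA : e = (q, τ q) := by
    have h1 := eval_eq h (q, τ q)
    rw [Mperm_apply, if_pos rfl, Finsupp.add_apply, Finsupp.add_apply, Uperm_apply,
      if_neg (fun hh => hh.2.1 rfl), Finsupp.single_apply,
      if_neg (fun hh : (p, jp) = (q, τ q) => hpq (congrArg Prod.fst hh)),
      Finsupp.single_apply] at h1
    by_contra hne
    rw [if_neg hne] at h1
    simp at h1
  -- Step B : jp = τ p
  have hB : jp = τ p := by
    have h1 := eval_eq h (p, τ p)
    rw [Mperm_apply, if_pos rfl, Finsupp.add_apply, Finsupp.add_apply, Uperm_apply,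
      if_neg (fun hh => hh.1 rfl), hA, Finsupp.single_apply, Finsupp.single_apply,
      if_neg (fun hh : (q, τ q) = (p, τ p) => hpq (congrArg Prod.fst hh).symm)] at h1
    by_contra hne
    rw [if_neg (fun hh : (p, jp) = (p, τ p) => hne (congrArg Prod.snd hh))] at h1
    simp at h1
  -- Step C : τ agrees with τ0 away from p, q
  have hC : ∀ l, l ≠ p → l ≠ q → τ l = τ0 l := by
    intro l hlp hlq
    have h1 := eval_eq h (l, τ l)
    rw [Mperm_apply, if_pos rfl, Finsupp.add_apply, Finsupp.add_apply, Uperm_apply, hA,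
      Finsupp.single_apply,
      if_neg (fun hh : (p, jp) = (l, τ l) => hlp (congrArg Prod.fst hh).symm),
      Finsupp.single_apply,
      if_neg (fun hh : (q, τ q) = (l, τ l) => hlq (congrArg Prod.fst hh).symm)] at h1
    by_contra hne
    rw [if_neg (fun hh => hne hh.2.2.symm)] at h1
    simp at h1
  -- Step D : τ p ∈ {τ0 p, τ0 q}
  have hD : τ p = τ0 p ∨ τ p = τ0 q := by
    set l := τ0.symm (τ p) with hl
    have hll : τ0 l = τ p := Equiv.apply_symm_apply τ0 (τ p)
    by_cases h1 : l = p
    · left; rw [← hll, h1]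
    · by_cases h2 : l = q
      · right; rw [← hll, h2]
      · exfalso
        have := hC l h1 h2
        have : τ l = τ p := by rw [this, hll]
        exact h1 (τ.injective this)
  rcases hD with hDp | hDq
  · -- τ = τ0
    have hq' : τ q = τ0 q := by
      set l := τ0.symm (τ q) with hl
      have hll : τ0 l = τ q := Equiv.apply_symm_apply τ0 (τ q)
      by_cases h1 : l = p
      · exfalso
        have : τ q = τ p := by rw [← hll, h1, hDp]
        exact hpq (τ.injective this).symm
      · by_cases h2 : l = q
        · rw [← hll, h2]
        · exfalso
          have h3 := hC l h1 h2
          have : τ l = τ q := by rw [h3, hll]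
          exact h2 (τ.injective this)
    have hτ : τ = τ0 := by
      apply Equiv.ext
      intro x
      by_cases h1 : x = p
      · rw [h1, hDp]
      · by_cases h2 : x = q
        · rw [h2, hq']
        · exact hC x h1 h2
    left
    exact ⟨by rw [hB, hDp], by rw [hA, hq'], hτ⟩
  · -- τ = τ0 * swap p q
    have hq' : τ q = τ0 p := by
      set l := τ0.symm (τ q) with hl
      have hll : τ0 l = τ q := Equiv.apply_symm_apply τ0 (τ q)
      by_cases h2 : l = q
      · exfalso
        have : τ q = τ p := by rw [← hll, h2, hDq]
        exact hpq (τ.injective this).symm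
      · by_cases h1 : l = p
        · rw [← hll, h1]
        · exfalso
          have h3 := hC l h1 h2
          have : τ l = τ q := by rw [h3, hll]
          exact h2 (τ.injective this)
    have hτ : τ = τ0 * Equiv.swap p q := by
      apply Equiv.ext
      intro x
      rw [Equiv.Perm.mul_apply]
      by_cases h1 : x = p
      · rw [h1, Equiv.swap_apply_left, hDq]
      · by_cases h2 : x = q
        · rw [h2, Equiv.swap_apply_right, hq']
        · rw [Equiv.swap_apply_of_ne_of_ne h1 h2]
          exact hC x h1 h2
    right
    exact ⟨by rw [hB, hDq], by rw [hA, hq'], hτ⟩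

end solve

section coeffs
variable {k : Type*} [Field k] {n : ℕ}

lemma prod_X_single {ι : Type*} (s : Finset ι) (f : ι → (Fin n × Fin n)) :
    ∏ i ∈ s, (X (f i) : MvPolynomial (Fin n × Fin n) k)
      = monomial (∑ i ∈ s, Finsupp.single (f i) 1) 1 := by
  classical
  induction s using Finset.induction_on with
  | empty => simp [monomial_zero']
  | insert _ _ hnotmem ih =>
    rw [Finset.prod_insert hnotmem, Finset.sum_insert hnotmem, ih, X,
      monomial_mul, one_mul]

variable (c : Equiv.Perm (Fin n) → k) {D : MvPolynomial (Fin n × Fin n) k}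
  (hD : D = ∑ τ : Equiv.Perm (Fin n), C (c τ) * ∏ i : Fin n, X (i, τ i))

include hD

lemma coeffD (v : (Fin n × Fin n) →₀ ℕ) :
    coeff v D = ∑ τ : Equiv.Perm (Fin n), if Mperm τ = v then c τ else 0 := by
  rw [hD, coeff_sum]
  apply Finset.sum_congr rfl
  intro τ _
  rw [prod_X_single, C_mul_monomial, mul_one, coeff_monomial, Mperm]

lemma coeff_hessian_entry (u : (Fin n × Fin n) →₀ ℕ) (a e : Fin n × Fin n) :
    coeff u (hessian D a e)
      = ∑ τ : Equiv.Perm (Fin n),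
          if Mperm τ = u + Finsupp.single a 1 + Finsupp.single e 1 then c τ else 0 := by
  have : hessian D a e = pderiv a (pderiv e D) := rfl
  rw [this, _root_.coeff_pderiv, _root_.coeff_pderiv, coeffD c hD, Finset.mul_sum, Finset.mul_sum]
  apply Finset.sum_congr rfl
  intro τ _
  split_ifs with hM
  · have h1 : u a = 0 := by
      have e1 := eval_eq hM a
      obtain ⟨a1, a2⟩ := a
      rw [Mperm_apply] at e1
      rw [Finsupp.add_apply, Finsupp.add_apply, Finsupp.single_apply, if_pos rfl] at e1
      split_ifs at e1 <;> omega
    have h2 : (u + Finsupp.single a 1 : _ →₀ ℕ) e = 0 := by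
      have e1 := eval_eq hM e
      obtain ⟨e1', e2'⟩ := e
      rw [Mperm_apply] at e1
      rw [Finsupp.add_apply, Finsupp.single_apply, if_pos rfl] at e1
      split_ifs at e1 <;> omega
    rw [h1, h2]
    norm_num
  · rw [mul_zero, mul_zero]

lemma coeff_mul_entry (Y : Matrix (Fin n × Fin n) (Fin n × Fin n) k)
    (u : (Fin n × Fin n) →₀ ℕ) (a b : Fin n × Fin n) :
    coeff u ((hessian D * Y.map (C : k → MvPolynomial (Fin n × Fin n) k)) a b)
      = ∑ e : Fin n × Fin n, ∑ τ : Equiv.Perm (Fin n),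
          if Mperm τ = u + Finsupp.single a 1 + Finsupp.single e 1
          then Y e b * c τ else 0 := by
  rw [Matrix.mul_apply]
  rw [coeff_sum]
  apply Finset.sum_congr rfl
  intro e _
  rw [Matrix.map_apply, mul_comm, coeff_C_mul, coeff_hessian_entry c hD, Finset.mul_sum]
  apply Finset.sum_congr rfl
  intro τ _
  split_ifs <;> simp

end coeffs

section Teval
variable {k : Type*} [Field k] {n : ℕ}

lemma Tval {p q : Fin n} (hpq : p ≠ q) (τ0 : Equiv.Perm (Fin n))
    (g : (Fin n × Fin n) → Equiv.Perm (Fin n) → k) :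
    (∑ e : Fin n × Fin n, ∑ τ : Equiv.Perm (Fin n),
      if Mperm τ = Uperm τ0 p q + Finsupp.single (p, τ0 p) 1 + Finsupp.single e 1
      then g e τ else 0) = g (q, τ0 q) τ0 := by
  rw [Finset.sum_eq_single (q, τ0 q)]
  · rw [Finset.sum_eq_single τ0]
    · rw [if_pos (Uperm_add hpq).symm]
    · intro τ _ hτ
      rw [if_neg]
      intro hM
      rcases solve hpq hM with ⟨_, _, h3⟩ | ⟨h1, _, _⟩
      · exact hτ h3
      · exact hpq (τ0.injective h1)
    · simp
  · intro e _ he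
    apply Finset.sum_eq_zero
    intro τ _
    rw [if_neg]
    intro hM
    rcases solve hpq hM with ⟨_, h2, _⟩ | ⟨h1, _, _⟩
    · exact he h2
    · exact hpq (τ0.injective h1)
  · simp

lemma Tzero {p q : Fin n} (hpq : p ≠ q) (τ0 : Equiv.Perm (Fin n)) {jp : Fin n}
    (hj1 : jp ≠ τ0 p) (hj2 : jp ≠ τ0 q)
    (g : (Fin n × Fin n) → Equiv.Perm (Fin n) → k) :
    (∑ e : Fin n × Fin n, ∑ τ : Equiv.Perm (Fin n),
      if Mperm τ = Uperm τ0 p q + Finsupp.single (p, jp) 1 + Finsupp.single e 1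
      then g e τ else 0) = 0 := by
  apply Finset.sum_eq_zero
  intro e _
  apply Finset.sum_eq_zero
  intro τ _
  rw [if_neg]
  intro hM
  rcases solve hpq hM with ⟨h1, _, _⟩ | ⟨h1, _, _⟩
  · exact hj1 h1
  · exact hj2 h1

lemma Tzero' {p q : Fin n} (hpq : p ≠ q) (τ0 : Equiv.Perm (Fin n)) {b : Fin n × Fin n}
    (hbp : b.1 ≠ p) (hbq : b.1 ≠ q)
    (g : (Fin n × Fin n) → Equiv.Perm (Fin n) → k) :
    (∑ e : Fin n × Fin n, ∑ τ : Equiv.Perm (Fin n),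
      if Mperm τ = Uperm τ0 p q + Finsupp.single b 1 + Finsupp.single e 1
      then g e τ else 0) = 0 := by
  apply Finset.sum_eq_zero
  intro e _
  apply Finset.sum_eq_zero
  intro τ _
  rw [if_neg]
  intro hM
  have hA : e = (q, τ q) := by
    have h1 := eval_eq hM (q, τ q)
    rw [Mperm_apply, if_pos rfl, Finsupp.add_apply, Finsupp.add_apply, Uperm_apply,
      if_neg (fun hh => hh.2.1 rfl), Finsupp.single_apply,
      if_neg (fun hh : b = (q, τ q) => hbq (congrArg Prod.fst hh)),
      Finsupp.single_apply] at h1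
    by_contra hne
    rw [if_neg hne] at h1
    simp at h1
  have hA' : e = (p, τ p) := by
    have h1 := eval_eq hM (p, τ p)
    rw [Mperm_apply, if_pos rfl, Finsupp.add_apply, Finsupp.add_apply, Uperm_apply,
      if_neg (fun hh => hh.1 rfl), Finsupp.single_apply,
      if_neg (fun hh : b = (p, τ p) => hbp (congrArg Prod.fst hh)),
      Finsupp.single_apply] at h1
    by_contra hne
    rw [if_neg hne] at h1
    simp at h1
  rw [hA] at hA'
  exact hpq (congrArg Prod.fst hA').symm

end Teval

section main
variable {n : ℕ}

lemma exists_third (hn : 3 ≤ n) (x y : Fin n) : ∃ z : Fin n, z ≠ x ∧ z ≠ y := by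
  have hcard : (({x, y} : Finset (Fin n))ᶜ).Nonempty := by
    rw [← Finset.card_pos, Finset.card_compl]
    have h1 : ({x, y} : Finset (Fin n)).card ≤ 2 :=
      le_trans (Finset.card_insert_le _ _) (by simp)
    have h2 : Fintype.card (Fin n) = n := Fintype.card_fin n
    omega
  obtain ⟨z, hz⟩ := hcard
  simp only [Finset.mem_compl, Finset.mem_insert, Finset.mem_singleton, not_or] at hz
  exact ⟨z, hz.1, hz.2⟩

lemma exists_perm_two {a1 b1 a2 b2 : Fin n} (h1 : a1 ≠ b1) (h2 : a2 ≠ b2) :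
    ∃ τ : Equiv.Perm (Fin n), τ a1 = a2 ∧ τ b1 = b2 := by
  set g := Equiv.swap a1 a2 with hg
  set w := g b1 with hw
  have hwa2 : w ≠ a2 := by
    intro hh
    have : g b1 = g a1 := by
      show w = g a1
      rw [hh, hg, Equiv.swap_apply_left]
    exact h1 (g.injective this).symm
  refine ⟨g.trans (Equiv.swap w b2), ?_, ?_⟩
  · show Equiv.swap w b2 (g a1) = a2
    rw [hg, Equiv.swap_apply_left, Equiv.swap_apply_of_ne_of_ne (Ne.symm hwa2) h2]
  · show Equiv.swap w b2 (g b1) = b2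
    rw [← hw, Equiv.swap_apply_left]

end main

theorem determinant_like_is_central {k : Type*} [Field k] {n : ℕ} (hn : 3 ≤ n)
    (hchar : ringChar k = 0 ∨ n < ringChar k)
    (c : Equiv.Perm (Fin n) → k) (hc : ∀ τ, c τ ≠ 0)
    (D : MvPolynomial (Fin n × Fin n) k)
    (hD : D = ∑ τ : Equiv.Perm (Fin n), C (c τ) * ∏ i : Fin n, X (i, τ i)) :
    center D = Set.range
      (fun lam : k => lam • (1 : Matrix (Fin n × Fin n) (Fin n × Fin n) k)) := by
  ext Y
  constructor
  · intro hY
    have hY' : (hessian D * Y.map (C : k → MvPolynomial (Fin n × Fin n) k))ᵀ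
        = hessian D * Y.map (C : k → MvPolynomial (Fin n × Fin n) k) := hY
    -- the coefficient-level consequence of the centrality equation
    have key : ∀ (a b : Fin n × Fin n) (u : (Fin n × Fin n) →₀ ℕ),
        (∑ e : Fin n × Fin n, ∑ τ : Equiv.Perm (Fin n),
          if Mperm τ = u + Finsupp.single b 1 + Finsupp.single e 1
          then Y e a * c τ else 0)
        = ∑ e : Fin n × Fin n, ∑ τ : Equiv.Perm (Fin n),
          if Mperm τ = u + Finsupp.single a 1 + Finsupp.single e 1
          then Y e b * c τ else 0 := by
      intro a b u
      have h2 : (hessian D * Y.map (C : k → MvPolynomial (Fin n × Fin n) k)) b a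
          = (hessian D * Y.map (C : k → MvPolynomial (Fin n × Fin n) k)) a b := by
        conv_rhs => rw [← hY']
        rw [Matrix.transpose_apply]
      have h3 := congrArg (coeff u) h2
      rwa [coeff_mul_entry c hD, coeff_mul_entry c hD] at h3
    -- Step 1: entries with distinct rows vanish
    have goalA : ∀ i j : Fin n × Fin n, i.1 ≠ j.1 → Y i j = 0 := by
      rintro ⟨i1, i2⟩ ⟨j1, j2⟩ hne
      simp only at hne
      obtain ⟨a1, ha1i, ha1j⟩ := exists_third hn i1 j1
      set τ0 := Equiv.swap i1 i2 with hτ0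
      have hτ0i : τ0 i1 = i2 := Equiv.swap_apply_left _ _
      have h1 := key (a1, τ0 a1) (j1, j2) (Uperm τ0 a1 i1)
      rw [Tzero' ha1i τ0 (show (j1, j2).1 ≠ a1 from Ne.symm ha1j)
        (show (j1, j2).1 ≠ i1 from Ne.symm hne) _] at h1
      rw [Tval ha1i τ0 _] at h1
      rw [hτ0i] at h1
      rcases mul_eq_zero.mp h1.symm with h | h
      · exact h
      · exact absurd h (hc τ0)
    -- Step 2: entries with equal rows but distinct columns vanish
    have goalB : ∀ (i1 i2 j2 : Fin n), i2 ≠ j2 → Y (i1, i2) (i1, j2) = 0 := by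
      intro i1 i2 j2 hne
      obtain ⟨a1, ha1, _⟩ := exists_third hn i1 i1
      obtain ⟨a2, ha2i, ha2j⟩ := exists_third hn i2 j2
      obtain ⟨τ0, hτa, hτi⟩ := exists_perm_two ha1 ha2i
      have h1 := key (a1, τ0 a1) (i1, j2) (Uperm τ0 a1 i1)
      rw [Tval ha1 τ0 _, hτi] at h1
      rw [Uperm_symm, Tzero (Ne.symm ha1) τ0 (by rw [hτi]; exact Ne.symm hne)
        (by rw [hτa]; exact fun hh => ha2j hh.symm) _] at h1
      rcases mul_eq_zero.mp h1.symm with h | h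
      · exact h
      · exact absurd h (hc τ0)
    -- Step 3: diagonal entries with distinct rows and columns agree
    have goalC : ∀ i j : Fin n × Fin n, i.1 ≠ j.1 → i.2 ≠ j.2 → Y i i = Y j j := by
      rintro ⟨i1, i2⟩ ⟨j1, j2⟩ hne1 hne2
      simp only at hne1 hne2
      obtain ⟨τ0, hτi, hτj⟩ := exists_perm_two hne1 hne2
      have h1 := key (i1, τ0 i1) (j1, τ0 j1) (Uperm τ0 i1 j1)
      rw [Tval hne1 τ0 _] at h1
      rw [Uperm_symm, Tval (Ne.symm hne1) τ0 _] at h1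
      rw [hτi, hτj] at h1
      exact mul_right_cancel₀ (hc τ0) h1
    -- assemble : Y is scalar
    have hnpos : 0 < n := by omega
    set z : Fin n := ⟨0, hnpos⟩ with hz
    set lam : k := Y (z, z) (z, z) with hlam
    have hdiag : ∀ s : Fin n × Fin n, Y s s = lam := by
      rintro ⟨s1, s2⟩
      obtain ⟨r1, hr1s, hr1z⟩ := exists_third hn s1 z
      obtain ⟨r2, hr2s, hr2z⟩ := exists_third hn s2 z
      have e1 : Y (s1, s2) (s1, s2) = Y (r1, r2) (r1, r2) :=
        goalC (s1, s2) (r1, r2) (Ne.symm hr1s) (Ne.symm hr2s)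
      have e2 : Y (r1, r2) (r1, r2) = Y (z, z) (z, z) :=
        goalC (r1, r2) (z, z) hr1z hr2z
      rw [e1, e2]
    refine ⟨lam, ?_⟩
    ext i j
    simp only [Matrix.smul_apply, Matrix.one_apply, smul_eq_mul]
    by_cases hij : i = j
    · rw [if_pos hij, mul_one, hij, hdiag j]
    · rw [if_neg hij, mul_zero]
      by_cases h1 : i.1 = j.1
      · obtain ⟨i1, i2⟩ := i
        obtain ⟨j1, j2⟩ := j
        simp only at h1
        subst h1
        have h2 : i2 ≠ j2 := fun hh => hij (by rw [hh])
        exact (goalB i1 i2 j2 h2).symm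
      · exact (goalA i j h1).symm
  · rintro ⟨lam, rfl⟩
    show (hessian D * (lam • (1 : Matrix (Fin n × Fin n) (Fin n × Fin n) k)).map
      (C : k → MvPolynomial (Fin n × Fin n) k))ᵀ = _
    have hmap : (lam • (1 : Matrix (Fin n × Fin n) (Fin n × Fin n) k)).map
        (C : k → MvPolynomial (Fin n × Fin n) k)
        = (C lam : MvPolynomial (Fin n × Fin n) k)
            • (1 : Matrix (Fin n × Fin n) (Fin n × Fin n) (MvPolynomial (Fin n × Fin n) k)) := by
      ext i j
      simp only [Matrix.map_apply, Matrix.smul_apply, Matrix.one_apply, smul_eq_mul]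
      split_ifs <;> simp
    rw [hmap, Matrix.mul_smul, Matrix.mul_one, Matrix.transpose_smul, hessian_transpose]
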